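/- Let p be a prime number and let R be a commutative ring of characteristic p. Let h ∈ R⟦X⟧ be a formal power series such that the coefficient of X^m in h vanishes whenever p does not divide m. Then there exists g ∈ R⟦X⟧ such that ∂^{p−1}(g) + g^p = h, where ∂^{p−1} denotes the (p−1)-fold iterated formal derivative. -/

import Mathlib

open PowerSeries Finset

/-- coefficient of `f^p` in characteristic `p`. -/
lemma aux_coeff_pow_char {R : Type*} [CommRing R] (p : ℕ) (hp : p.Prime) [CharP R p]
    (f : PowerSeries R) (n : ℕ) :
    PowerSeries.coeff n (f ^ p) =
      if p ∣ n then (PowerSeries.coeff (n / p) f) ^ p else 0 := by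
  haveI := Fact.mk hp
  set q : Polynomial R := trunc (n + 1) f with hq
  have h1 : PowerSeries.coeff n (f ^ p) =
      Polynomial.coeff (trunc (n + 1) ((q : PowerSeries R) ^ p)) n := by
    rw [trunc_trunc_pow, coeff_trunc, if_pos (Nat.lt_succ_self n)]
  rw [h1, ← Polynomial.coe_pow, coeff_trunc, if_pos (Nat.lt_succ_self n), Polynomial.coeff_coe]
  rw [← Polynomial.map_frobenius_expand (p := p), Polynomial.coeff_map, Polynomial.coeff_expand hp.pos]
  split_ifs with hd
  · rw [frobenius_def, hq, coeff_trunc, if_pos (Nat.lt_succ_of_le (Nat.div_le_self n p))]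
  · rw [map_zero]

lemma aux_coeff_iter_deriv {R : Type*} [CommRing R] (f : PowerSeries R) (k n : ℕ) :
    PowerSeries.coeff n (PowerSeries.derivativeFun^[k] f) =
      PowerSeries.coeff (n + k) f * ∏ i ∈ range k, ((n + 1 + i : ℕ) : R) := by
  induction k generalizing f with
  | zero => simp
  | succ k ih =>
      rw [Function.iterate_succ_apply, ih]
      erw [PowerSeries.coeff_derivative]
      rw [prod_range_succ]
      push_cast
      ring

private noncomputable def solCoeff {R : Type*} [CommRing R] (p : ℕ) (hp : 2 ≤ p) (c : ℕ → R)
    (m : ℕ) : R :=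
  -c (p * m) + (if hd : p ∣ (m + 1) then (solCoeff p hp c ((m + 1) / p - 1)) ^ p else 0)
  termination_by m
  decreasing_by
    have hm : 1 ≤ m := by
      rcases Nat.eq_zero_or_pos m with rfl | hm
      · have := Nat.le_of_dvd one_pos (by simpa using hd)
        omega
      · exact hm
    have h2 : (m + 1) / p ≤ (m + 1) / 2 := Nat.div_le_div_left hp (by norm_num)
    omega

theorem stmt_11 (p : ℕ) (hp : p.Prime) (R : Type*) [CommRing R] [CharP R p]
    (h : PowerSeries R) (hh : ∀ m : ℕ, ¬ p ∣ m → PowerSeries.coeff m h = 0) :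
    ∃ g : PowerSeries R, PowerSeries.derivativeFun^[p - 1] g + g ^ p = h := by
  haveI := Fact.mk hp
  have hp2 : 2 ≤ p := hp.two_le
  set b : ℕ → R := solCoeff p hp2 (fun n => PowerSeries.coeff n h) with hb
  have hbrec : ∀ m, b m = -PowerSeries.coeff (p * m) h +
      (if p ∣ (m + 1) then (b ((m + 1) / p - 1)) ^ p else 0) := by
    intro m
    rw [hb]
    rw [solCoeff]
    simp
  set g : PowerSeries R := PowerSeries.mk (fun n => if p ∣ (n + 1) then b (n / p) else 0) with hg
  refine ⟨g, ?_⟩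
  ext n
  rw [map_add, aux_coeff_iter_deriv, aux_coeff_pow_char p hp]
  have hdg : ∀ k, PowerSeries.coeff k g = if p ∣ (k + 1) then b (k / p) else 0 := by
    intro k; rw [hg, PowerSeries.coeff_mk]
  by_cases hn : p ∣ n
  · obtain ⟨m, rfl⟩ := hn
    -- the product is (p-1)! = -1
    have hwil : (∏ i ∈ range (p - 1), ((p * m + 1 + i : ℕ) : R)) = -1 := by
      have hcast : ∀ i : ℕ, ((p * m + 1 + i : ℕ) : R) = ((1 + i : ℕ) : R) := by
        intro i
        push_cast
        rw [CharP.cast_eq_zero R p]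
        ring
      rw [Finset.prod_congr rfl fun i _ => hcast i]
      have hfac : (∏ i ∈ range (p - 1), ((1 + i : ℕ) : R)) = (((p - 1).factorial : ℕ) : R) := by
        rw [← Nat.cast_prod]
        congr 1
        rw [show (∏ i ∈ range (p - 1), (1 + i)) = ∏ i ∈ range (p - 1), (i + 1) from
          Finset.prod_congr rfl fun i _ => by omega]
        exact Finset.prod_range_add_one_eq_factorial (p - 1)
      rw [hfac]
      have hw : (((p - 1).factorial : ℕ) : ZMod p) = -1 := ZMod.wilsons_lemma p
      calc (((p - 1).factorial : ℕ) : R)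
          = (ZMod.castHom (dvd_refl p) R) (((p - 1).factorial : ℕ) : ZMod p) := by
            rw [map_natCast]
        _ = -1 := by rw [hw, map_neg, map_one]
    -- coefficient of the derivative term
    have hdvd1 : p ∣ (p * m + (p - 1)) + 1 :=
      ⟨m + 1, by have := hp.two_le; rw [Nat.mul_add, mul_one]; omega⟩
    have hdivval : (p * m + (p - 1)) / p = m := by
      rw [Nat.mul_add_div hp.pos, Nat.div_eq_of_lt (by omega), add_zero]
    rw [hdg, if_pos hdvd1, hdivval, hwil]
    have hmdiv : (p * m) / p = m := Nat.mul_div_cancel_left _ hp.pos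
    rw [if_pos ⟨m, rfl⟩, hmdiv, hdg]
    rw [hbrec m]
    by_cases hm1 : p ∣ (m + 1)
    · obtain ⟨k, hk⟩ := hm1
      have hk1 : 1 ≤ k := by nlinarith [hp.pos]
      have hpk : p ≤ p * k := Nat.le_mul_of_pos_right p hk1
      have hm' : m = p * (k - 1) + (p - 1) := by
        rw [Nat.mul_sub, mul_one]
        have := hp.two_le
        omega
      have e1 : m / p = k - 1 := by
        rw [hm', Nat.mul_add_div hp.pos, Nat.div_eq_of_lt (by have := hp.two_le; omega), add_zero]
      have e2 : (m + 1) / p = k := by rw [hk, Nat.mul_div_cancel_left _ hp.pos]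
      have hmp : m / p = (m + 1) / p - 1 := by rw [e1, e2]
      rw [if_pos ⟨k, hk⟩, if_pos ⟨k, hk⟩, hmp]
      ring
    · rw [if_neg hm1, if_neg hm1, zero_pow hp.ne_zero]
      ring
  · -- p does not divide n
    have h1 : ¬ p ∣ (n + (p - 1)) + 1 := by
      intro hd
      apply hn
      have he : (n + (p - 1)) + 1 = n + p := by omega
      rw [he] at hd
      exact (Nat.dvd_add_iff_left (dvd_refl p)).mpr hd
    rw [hdg, if_neg h1, zero_mul, if_neg hn, add_zero]
    exact (hh n hn).symm
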